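/- Let (R,M) be a discrete valuation domain with finite residue field and valuation v, and let S ⊆ R be a balanced set. Then there exist positive integers (m_s)_{s∈S} and a non-negative integer e such that the polynomial f = ∏_{s∈S}(x−s)^{m_s} satisfies v(f(r)) = e for every r lying in any S-poor neighborhood of the partition C_S. -/

import Mathlib

open Polynomial


open Polynomial

section Defs

variable (R K : Type*)

/-- `Int(R) = {F ∈ K[x] ∣ F(R) ⊆ R}`, the ring of integer-valued polynomials,
as a subring of `K[x]`. -/
def intPoly [CommRing R] [CommRing K] [Algebra R K] : Subring (Polynomial K) where
  carrier := {F | ∀ r : R, ∃ a : R, F.eval (algebraMap R K r) = algebraMap R K a}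
  mul_mem' := by
    rintro f g hf hg r
    obtain ⟨a, ha⟩ := hf r
    obtain ⟨b, hb⟩ := hg r
    exact ⟨a * b, by simp [ha, hb]⟩
  one_mem' := fun r => ⟨1, by simp⟩
  add_mem' := by
    rintro f g hf hg r
    obtain ⟨a, ha⟩ := hf r
    obtain ⟨b, hb⟩ := hg r
    exact ⟨a + b, by simp [ha, hb]⟩
  zero_mem' := fun r => ⟨0, by simp⟩
  neg_mem' := by
    rintro f hf r
    obtain ⟨a, ha⟩ := hf r
    exact ⟨-a, by simp [ha]⟩

/-- Polynomials with coefficients in `R` are integer-valued. -/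
theorem map_mem_intPoly [CommRing R] [CommRing K] [Algebra R K] (f : Polynomial R) :
    f.map (algebraMap R K) ∈ intPoly R K :=
  fun r => ⟨f.eval r, by rw [Polynomial.eval_map, Polynomial.eval₂_at_apply]⟩

/-- An element `d` of a commutative monoid is absolutely irreducible if it is irreducible
and, for every `n ≥ 1`, the only factorization of `d ^ n` into irreducibles is, up to order
and unit factors, `d ⋯ d` (`n` copies). -/
def AbsolutelyIrreducible {α : Type*} [CommMonoid α] (d : α) : Prop :=
  Irreducible d ∧ ∀ n : ℕ, 1 ≤ n → ∀ l : Multiset α, (∀ a ∈ l, Irreducible a) →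
    l.prod = d ^ n → Multiset.card l = n ∧ ∀ a ∈ l, Associated a d

/-- The fixed divisor of a polynomial `f ∈ R[x]`: the ideal of `R` generated by the
values of `f` on `R`. -/
def fixDiv [CommRing R] (f : Polynomial R) : Ideal R :=
  Ideal.span (Set.range fun a => f.eval a)

/-- The fixed divisor of an integer-valued polynomial `F ∈ Int(R)`: the ideal of `R`
generated by (the elements of `R` representing) the values of `F` on `R`. -/
def fixDivK [CommRing R] [CommRing K] [Algebra R K] (F : Polynomial K) : Ideal R :=
  Ideal.span {a : R | ∃ r : R, F.eval (algebraMap R K r) = algebraMap R K a}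

/-- The (normalized additive) valuation of a nonzero element of a discrete valuation
ring: the largest `n` such that `x ∈ M ^ n`, where `M` is the maximal ideal. -/
noncomputable def mval [CommRing R] [IsLocalRing R] (x : R) : ℕ :=
  sSup {n : ℕ | x ∈ IsLocalRing.maximalIdeal R ^ n}

open scoped Classical in
/-- The valuation `v : R → ℕ∞`, with `v 0 = ⊤`. -/
noncomputable def vR [CommRing R] [IsLocalRing R] (x : R) : ℕ∞ :=
  if x = 0 then ⊤ else (mval R x : ℕ∞)

open scoped Classical in
/-- The valuation extended to the quotient field `K`, with `v 0 = ⊤`. -/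
noncomputable def vK [CommRing R] [IsLocalRing R] [CommRing K] [Algebra R K]
    [IsLocalization (nonZeroDivisors R) K] (x : K) : WithTop ℤ :=
  if x = 0 then ⊤
  else (((mval R (IsLocalization.sec (nonZeroDivisors R) x).1 : ℤ) -
        (mval R ((IsLocalization.sec (nonZeroDivisors R) x).2 : R) : ℤ) : ℤ) : WithTop ℤ)

/-- The residue class `s + M ^ n` of `s` modulo the `n`-th power of the maximal ideal. -/
def resClass [CommRing R] [IsLocalRing R] (s : R) (n : ℕ) : Set R :=
  {x | x - s ∈ IsLocalRing.maximalIdeal R ^ n}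

/-- A finite set `S ⊆ R` is balanced if, letting `n s` for each `s ∈ S` be the minimal
non-negative integer with `(s + M ^ (n s)) ∩ S = {s}`, the residue classes `s + M ^ (n s)`
(`s ∈ S`) are pairwise disjoint and cover `R`. -/
def IsBalanced [CommRing R] [IsLocalRing R] (S : Finset R) : Prop :=
  S.Nonempty ∧
  ∃ n : R → ℕ,
    (∀ s ∈ S, resClass R s (n s) ∩ (S : Set R) = {s} ∧
      ∀ k : ℕ, resClass R s k ∩ (S : Set R) = {s} → n s ≤ k) ∧
    (∀ s ∈ S, ∀ t ∈ S, s ≠ t → Disjoint (resClass R s (n s)) (resClass R t (n t))) ∧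
    (⋃ s ∈ S, resClass R s (n s)) = Set.univ

/-- `ρ` describes the `M`-adic partition `C_S` associated to `S`: the partition of `R`
into the residue classes `s + M ^ (ρ s)`, `s ∈ S`, such that each block contains both a
residue class of `M ^ (ρ s + 1)` intersecting `S` and one disjoint from `S`. -/
def IsSPartition [CommRing R] [IsLocalRing R] (S : Finset R) (ρ : R → ℕ) : Prop :=
  (⋃ s ∈ S, resClass R s (ρ s)) = Set.univ ∧
  (∀ s ∈ S, ∀ t ∈ S,
    resClass R s (ρ s) = resClass R t (ρ t) ∨
      Disjoint (resClass R s (ρ s)) (resClass R t (ρ t))) ∧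
  (∀ s ∈ S,
    (∃ u : R, resClass R u (ρ s + 1) ⊆ resClass R s (ρ s) ∧
      (resClass R u (ρ s + 1) ∩ (S : Set R)).Nonempty) ∧
    (∃ u : R, resClass R u (ρ s + 1) ⊆ resClass R s (ρ s) ∧
      resClass R u (ρ s + 1) ∩ (S : Set R) = ∅))

/-- `S'` is a balanced set associated to `S` (relative to the partition data `ρ` of `C_S`):
`S' ⊆ S` is balanced, consists of one representative per block of `C_S`, and its associated
partition `C_{S'}` coincides with `C_S`. -/
def IsAssociatedBalancedSubset [CommRing R] [IsLocalRing R] (S S' : Finset R) (ρ : R → ℕ) :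
    Prop :=
  S' ⊆ S ∧ IsBalanced R S' ∧
  (∀ s ∈ S', ∀ t ∈ S', s ≠ t → Disjoint (resClass R s (ρ s)) (resClass R t (ρ t))) ∧
  (⋃ s ∈ S', resClass R s (ρ s)) = Set.univ

open scoped Classical in
/-- The partition matrix of the partition `{s + M ^ (ρ s) : s ∈ S}`: diagonal entries
`ρ s`, off-diagonal entries `v (s - t)`. -/
noncomputable def partitionMatrix [CommRing R] [IsLocalRing R] (S : Finset R) (ρ : R → ℕ) :
    Matrix {x // x ∈ S} {x // x ∈ S} ℤ :=
  Matrix.of fun s t =>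
    if (s : R) = (t : R) then (ρ (s : R) : ℤ) else (mval R ((s : R) - (t : R)) : ℤ)

/-- `m` is the vector of multiplicities of the equalizing polynomial of `S`: the unique
vector of positive integers with gcd `1` such that `A · m = e · (1, …, 1)ᵀ` for some
non-negative integer `e`, where `A` is the partition matrix. -/
def IsEqualizingVector [CommRing R] [IsLocalRing R] (S : Finset R) (ρ : R → ℕ) (m : R → ℕ) :
    Prop :=
  (∀ s ∈ S, 0 < m s) ∧ S.gcd m = 1 ∧
  ∃ e : ℕ, ∀ s : {x // x ∈ S},
    (∑ t : {x // x ∈ S}, partitionMatrix R S ρ s t * (m (t : R) : ℤ)) = (e : ℤ)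

/-- `f` is the equalizing polynomial of `S`. -/
def IsEqualizingPoly [CommRing R] [IsLocalRing R] (S : Finset R) (f : Polynomial R) : Prop :=
  ∃ (ρ : R → ℕ) (m : R → ℕ), IsSPartition R S ρ ∧ IsEqualizingVector R S ρ m ∧
    f = ∏ s ∈ S, (Polynomial.X - Polynomial.C s) ^ m s

/-- The posh set of `f ∈ R[x]`: the set of `r ∈ R` where `v (f r)` exceeds
`min_{t ∈ R} v (f t)`. -/
noncomputable def poshR [CommRing R] [IsLocalRing R] (f : Polynomial R) : Set R :=
  {r : R | (⨅ t : R, vR R (f.eval t)) < vR R (f.eval r)}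

/-- The posh set of `F ∈ K[x]`: the set of `r ∈ R` where `v (F r)` exceeds
`min_{t ∈ R} v (F t)`. -/
def poshK [CommRing R] [IsLocalRing R] [CommRing K] [Algebra R K]
    [IsLocalization (nonZeroDivisors R) K] (F : Polynomial K) : Set R :=
  {r : R | ∃ t : R, vK R K (F.eval (algebraMap R K t)) < vK R K (F.eval (algebraMap R K r))}

/-- `r` lies in an `S`-poor neighborhood of the partition `C_S` (described by `ρ`):
a residue class `r + M ^ (ρ s + 1)` disjoint from `S` inside a block `s + M ^ (ρ s)`. -/
def IsPoorElt [CommRing R] [IsLocalRing R] (S : Finset R) (ρ : R → ℕ) (r : R) : Prop :=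
  ∃ s ∈ S, r ∈ resClass R s (ρ s) ∧ resClass R r (ρ s + 1) ∩ (S : Set R) = ∅

/-- The rich set of `S`: the union of the `S`-rich neighborhoods `s + M ^ (ρ s + 1)`,
`s ∈ S`. -/
def richSet [CommRing R] [IsLocalRing R] (S : Finset R) (ρ : R → ℕ) : Set R :=
  ⋃ s ∈ S, resClass R s (ρ s + 1)

/-- `a` is an `M`-ordering (`P`-ordering) of `R`. -/
def IsMOrdering [CommRing R] [IsLocalRing R] (a : ℕ → R) : Prop :=
  ∀ k : ℕ, ∀ x : R,
    vR R (∏ i ∈ Finset.range k, (a k - a i)) ≤ vR R (∏ i ∈ Finset.range k, (x - a i))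

end Defs

section MVal
variable {R : Type*} [CommRing R] [IsDomain R] [IsDiscreteValuationRing R]

open IsLocalRing

lemma mval_spec {ϖ : R} (hϖ : Irreducible ϖ) (n : ℕ) (u : Rˣ) :
    mval R (u * ϖ ^ n) = n := by
  have hset : {k : ℕ | (u : R) * ϖ ^ n ∈ maximalIdeal R ^ k} = Set.Iic n := by
    ext k
    simp only [Set.mem_setOf_eq, Set.mem_Iic, hϖ.maximalIdeal_eq, Ideal.span_singleton_pow,
      Ideal.mem_span_singleton]
    constructor
    · intro h
      have h2 : ϖ ^ k ∣ ϖ ^ n := Units.dvd_mul_left.mp h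
      exact (pow_dvd_pow_iff hϖ.ne_zero hϖ.not_isUnit).mp h2
    · intro h
      exact Units.dvd_mul_left.mpr (pow_dvd_pow _ h)
  rw [mval, hset, csSup_Iic]

lemma exists_unit_rep {x : R} (hx : x ≠ 0) {ϖ : R} (hϖ : Irreducible ϖ) :
    ∃ u : Rˣ, x = u * ϖ ^ (mval R x) := by
  obtain ⟨n, u, rfl⟩ := IsDiscreteValuationRing.eq_unit_mul_pow_irreducible hx hϖ
  exact ⟨u, by rw [mval_spec hϖ]⟩

lemma mem_pow_iff_mval {x : R} (hx : x ≠ 0) (k : ℕ) :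
    x ∈ maximalIdeal R ^ k ↔ k ≤ mval R x := by
  obtain ⟨ϖ, hϖ⟩ := IsDiscreteValuationRing.exists_irreducible R
  obtain ⟨n, u, rfl⟩ := IsDiscreteValuationRing.eq_unit_mul_pow_irreducible hx hϖ
  rw [mval_spec hϖ, hϖ.maximalIdeal_eq, Ideal.span_singleton_pow, Ideal.mem_span_singleton,
    Units.dvd_mul_left, pow_dvd_pow_iff hϖ.ne_zero hϖ.not_isUnit]

lemma mval_mul {x y : R} (hx : x ≠ 0) (hy : y ≠ 0) :
    mval R (x * y) = mval R x + mval R y := by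
  obtain ⟨ϖ, hϖ⟩ := IsDiscreteValuationRing.exists_irreducible R
  obtain ⟨u, hu⟩ := exists_unit_rep hx hϖ
  obtain ⟨v, hv⟩ := exists_unit_rep hy hϖ
  have h2 : x * y = ((u*v : Rˣ) : R) * ϖ ^ (mval R x + mval R y) := by
    rw [Units.val_mul, pow_add]
    nth_rewrite 1 [hu, hv]
    ring
  rw [h2, mval_spec hϖ]

lemma mval_pow {x : R} (hx : x ≠ 0) (k : ℕ) : mval R (x ^ k) = k * mval R x := by
  obtain ⟨ϖ, hϖ⟩ := IsDiscreteValuationRing.exists_irreducible R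
  induction k with
  | zero =>
      have := mval_spec hϖ 0 1
      simpa using this
  | succ k ih =>
      rw [pow_succ, mval_mul (pow_ne_zero _ hx) hx, ih]; ring

lemma mval_neg (x : R) : mval R (-x) = mval R x := by
  unfold mval
  congr 1
  ext k
  simp [neg_mem_iff]

lemma mval_min_le_add {x y : R} (hx : x ≠ 0) (hy : y ≠ 0) (hxy : x + y ≠ 0) :
    min (mval R x) (mval R y) ≤ mval R (x + y) := by
  rw [← mem_pow_iff_mval hxy]
  exact Ideal.add_mem _ ((mem_pow_iff_mval hx _).mpr (min_le_left _ _))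
    ((mem_pow_iff_mval hy _).mpr (min_le_right _ _))

lemma mval_add_eq_of_lt {x y : R} (hx : x ≠ 0) (hy : y ≠ 0) (h : mval R y < mval R x) :
    mval R (x + y) = mval R y := by
  have hxy : x + y ≠ 0 := by
    rintro h0
    have : y = -x := by linear_combination h0
    rw [this, mval_neg] at h; exact lt_irrefl _ h
  have h1 : mval R y ≤ mval R (x + y) := le_trans (by simp [le_of_lt h]) (mval_min_le_add hx hy hxy)
  have h2 : mval R (x + y) ≤ mval R y := by
    by_contra hc
    push_neg at hc
    have : y = (x + y) + (-x) := by ring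
    have h3 := mval_min_le_add hxy (neg_ne_zero.mpr hx) (by rw [← this]; exact hy)
    rw [← this, mval_neg] at h3
    omega
  omega

end MVal
section ResClass
variable {R : Type*} [CommRing R] [IsDomain R] [IsDiscreteValuationRing R]
open IsLocalRing

lemma mem_resClass_iff {x s : R} {n : ℕ} :
    x ∈ resClass R s n ↔ x - s ∈ maximalIdeal R ^ n := Iff.rfl

lemma mem_resClass_self (s : R) (n : ℕ) : s ∈ resClass R s n := by
  simp [mem_resClass_iff]

lemma mval_sub_comm (x y : R) : mval R (x - y) = mval R (y - x) := by
  rw [← mval_neg (y - x), neg_sub]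

lemma mem_resClass_iff_mval {x s : R} (hx : x ≠ s) {n : ℕ} :
    x ∈ resClass R s n ↔ n ≤ mval R (x - s) := by
  rw [mem_resClass_iff, mem_pow_iff_mval (sub_ne_zero.mpr hx)]

lemma resClass_eq_of_mem {x s : R} {n : ℕ} (h : x ∈ resClass R s n) :
    resClass R x n = resClass R s n := by
  ext y
  rw [mem_resClass_iff, mem_resClass_iff]
  constructor
  · intro hy
    have := Ideal.add_mem _ hy h
    simpa using this
  · intro hy
    have := Ideal.sub_mem _ hy h
    simpa using this

lemma resClass_anti {s : R} {a b : ℕ} (h : a ≤ b) : resClass R s b ⊆ resClass R s a := by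
  intro y hy
  exact Ideal.pow_le_pow_right h hy

open scoped Classical in
/-- The key combinatorial lemma: existence of an equalizing vector for any
"prefix-free" family of residue classes. -/
lemma key_lemma : ∀ (N B k : ℕ) (S : Finset R) (n : R → ℕ), B + S.card ≤ N →
    (∀ s ∈ S, k ≤ n s ∧ n s ≤ k + B) →
    (∀ s ∈ S, ∀ t ∈ S, s ≠ t → k ≤ mval R (s - t) ∧ mval R (s - t) < n s) →
    ∃ m : R → ℕ, (∀ s ∈ S, 0 < m s) ∧ ∃ e : ℕ,
      ∀ s ∈ S, (∑ t ∈ S, m t * ((if t = s then n s else mval R (s - t)) - k)) = e := by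
  intro N
  induction N using Nat.strong_induction_on with
  | _ N ih =>
  intro B k S n hN hbd hdisj
  classical
  rcases S.eq_empty_or_nonempty with rfl | ⟨s₀, hs₀⟩
  · exact ⟨fun _ => 1, by simp, 0, by simp⟩
  by_cases hex : ∃ s ∈ S, n s = k
  · obtain ⟨s₁, hs₁, hns₁⟩ := hex
    refine ⟨fun _ => 1, by simp, 0, ?_⟩
    intro s hs
    have hss₁ : s = s₁ := by
      by_contra hne
      have h1 := hdisj s₁ hs₁ s hs (fun h => hne h.symm)
      omega
    subst hss₁
    have hsingle : S = {s} := by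
      apply Finset.eq_singleton_iff_unique_mem.mpr
      refine ⟨hs, fun t ht => ?_⟩
      by_contra hne
      have h1 := hdisj s hs t ht (fun h => hne h.symm)
      omega
    rw [hsingle, Finset.sum_singleton]
    simp [hns₁]
  · push_neg at hex
    have hge : ∀ s ∈ S, k + 1 ≤ n s := by
      intro s hs
      have h1 := (hbd s hs).1
      have h2 := hex s hs
      omega
    have hB : 1 ≤ B := by
      have h1 := hge s₀ hs₀
      have h2 := (hbd s₀ hs₀).2
      omega
    set G := S.filter (fun t => s₀ - t ∈ maximalIdeal R ^ (k + 1)) with hGdef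
    set S' := S \ G with hS'def
    have hGS : G ⊆ S := Finset.filter_subset _ _
    have hs₀G : s₀ ∈ G := by
      rw [hGdef, Finset.mem_filter]
      exact ⟨hs₀, by simp⟩
    -- distinct elements of G have mval ≥ k+1
    have hGG : ∀ s ∈ G, ∀ t ∈ G, s ≠ t → k + 1 ≤ mval R (s - t) := by
      intro s hsG t htG hst
      rw [hGdef, Finset.mem_filter] at hsG htG
      have hmem : s - t ∈ maximalIdeal R ^ (k + 1) := by
        have := Ideal.sub_mem _ htG.2 hsG.2
        simpa using this
      exact (mem_pow_iff_mval (sub_ne_zero.mpr hst) _).mp hmem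
    -- an element of G and an element outside G (in S) have mval exactly k
    have hGX : ∀ s ∈ G, ∀ t ∈ S', mval R (s - t) = k := by
      intro s hsG t htS'
      rw [hS'def, Finset.mem_sdiff] at htS'
      have hst : s ≠ t := by
        rintro rfl
        exact htS'.2 hsG
      have h1 := (hdisj s (hGS hsG) t htS'.1 hst).1
      by_contra hne
      have h2 : k + 1 ≤ mval R (s - t) := by omega
      apply htS'.2
      rw [hGdef, Finset.mem_filter]
      refine ⟨htS'.1, ?_⟩
      have hm1 : s - t ∈ maximalIdeal R ^ (k + 1) :=
        (mem_pow_iff_mval (sub_ne_zero.mpr hst) _).mpr h2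
      rw [hGdef, Finset.mem_filter] at hsG
      have := Ideal.add_mem _ hsG.2 hm1
      simpa using this
    -- apply induction hypothesis to G at level k+1
    obtain ⟨m₁, hm₁pos, e₁, hm₁⟩ := ih ((B - 1) + G.card)
      (by
        have hcard : G.card ≤ S.card := Finset.card_le_card hGS
        omega)
      (B - 1) (k + 1) G n (le_refl _)
      (by
        intro s hs
        have h1 := hge s (hGS hs)
        have h2 := (hbd s (hGS hs)).2
        omega)
      (by
        intro s hs t ht hst
        refine ⟨hGG s hs t ht hst, (hdisj s (hGS hs) t (hGS ht) hst).2⟩)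
    -- apply induction hypothesis to S' at level k
    obtain ⟨m₂, hm₂pos, e₂, hm₂⟩ := ih (B + S'.card)
      (by
        have hcard : S'.card < S.card := by
          apply Finset.card_lt_card
          rw [hS'def]
          constructor
          · exact Finset.sdiff_subset
          · intro hsub
            exact absurd (hsub (hGS hs₀G)) (by simp [hS'def, hs₀G])
        omega)
      B k S' n (le_refl _)
      (fun s hs => hbd s (Finset.mem_sdiff.mp hs).1)
      (fun s hs t ht hst =>
        hdisj s (Finset.mem_sdiff.mp hs).1 t (Finset.mem_sdiff.mp ht).1 hst)
    set W₁ := ∑ t ∈ G, m₁ t with hW₁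
    have hW₁pos : 0 < W₁ := by
      rw [hW₁]
      exact Finset.sum_pos (fun t ht => hm₁pos t ht) ⟨s₀, hs₀G⟩
    -- sum over G for s ∈ G
    have hsumG : ∀ s ∈ G,
        (∑ t ∈ G, m₁ t * ((if t = s then n s else mval R (s - t)) - k)) = e₁ + W₁ := by
      intro s hs
      have : ∀ t ∈ G, m₁ t * ((if t = s then n s else mval R (s - t)) - k)
          = m₁ t * ((if t = s then n s else mval R (s - t)) - (k + 1)) + m₁ t := by
        intro t ht
        by_cases hts : t = s
        · subst hts
          simp only [eq_self_iff_true, if_true]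
          have h1 : k + 1 ≤ n t := hge t (hGS ht)
          rw [show n t - k = (n t - (k + 1)) + 1 from by omega, Nat.mul_add, Nat.mul_one]
        · simp only [if_neg hts]
          have h1 : k + 1 ≤ mval R (t - s) := hGG t ht s hs hts
          rw [mval_sub_comm] at h1
          rw [show mval R (s - t) - k = (mval R (s - t) - (k + 1)) + 1 from by omega,
            Nat.mul_add, Nat.mul_one]
      rw [Finset.sum_congr rfl this, Finset.sum_add_distrib, hm₁ s hs]
    rcases S'.eq_empty_or_nonempty with hS'e | ⟨s₁', hs₁'⟩
    · -- S' empty : S = G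
      have hSG : S = G := by
        rw [hS'def] at hS'e
        have := Finset.sdiff_eq_empty_iff_subset.mp hS'e
        exact Finset.Subset.antisymm this hGS
      refine ⟨m₁, fun s hs => hm₁pos s (hSG ▸ hs), e₁ + W₁, ?_⟩
      intro s hs
      rw [hSG] at hs ⊢
      exact hsumG s hs
    · -- S' nonempty : e₂ ≥ 1
      have he₂pos : 0 < e₂ := by
        rw [← hm₂ s₁' hs₁']
        have h1 : m₂ s₁' * ((if s₁' = s₁' then n s₁' else mval R (s₁' - s₁')) - k)
            ≤ ∑ t ∈ S', m₂ t * ((if t = s₁' then n s₁' else mval R (s₁' - t)) - k) :=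
          Finset.single_le_sum
            (f := fun t => m₂ t * ((if t = s₁' then n s₁' else mval R (s₁' - t)) - k))
            (fun t _ => Nat.zero_le _) hs₁'
        have h2 : 0 < m₂ s₁' := hm₂pos s₁' hs₁'
        have h3 := hge s₁' (Finset.mem_sdiff.mp hs₁').1
        simp only [eq_self_iff_true, if_true] at h1
        have h4 : 0 < m₂ s₁' * (n s₁' - k) := by
          apply Nat.mul_pos h2
          omega
        omega
      refine ⟨fun t => if t ∈ G then e₂ * m₁ t else (W₁ + e₁) * m₂ t, ?_, e₂ * (W₁ + e₁), ?_⟩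
      · intro s hs
        by_cases hsG : s ∈ G
        · simp only [if_pos hsG]
          exact Nat.mul_pos he₂pos (hm₁pos s hsG)
        · simp only [if_neg hsG]
          exact Nat.mul_pos (by omega) (hm₂pos s (Finset.mem_sdiff.mpr ⟨hs, hsG⟩))
      · intro s hs
        have hsplit : S = S' ∪ G := by
          rw [hS'def, Finset.sdiff_union_of_subset hGS]
        have hdisjGS : Disjoint S' G := Finset.sdiff_disjoint
        rw [hsplit, Finset.sum_union hdisjGS]
        dsimp only
        by_cases hsG : s ∈ G
        · -- sum over S' is zero
          have hz : ∀ t ∈ S', (if t ∈ G then e₂ * m₁ t else (W₁ + e₁) * m₂ t) *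
              ((if t = s then n s else mval R (s - t)) - k) = 0 := by
            intro t ht
            have htG : t ∉ G := (Finset.mem_sdiff.mp ht).2
            have hts : t ≠ s := by rintro rfl; exact htG hsG
            simp only [if_neg htG, if_neg hts, hGX s hsG t ht]
            simp
          rw [Finset.sum_eq_zero hz, zero_add]
          have : ∀ t ∈ G, (if t ∈ G then e₂ * m₁ t else (W₁ + e₁) * m₂ t) *
              ((if t = s then n s else mval R (s - t)) - k)
              = e₂ * (m₁ t * ((if t = s then n s else mval R (s - t)) - k)) := by
            intro t ht
            rw [if_pos ht, mul_assoc]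
          rw [Finset.sum_congr rfl this, ← Finset.mul_sum, hsumG s hsG]
          ring
        · -- s ∈ S' : sum over G is zero
          have hsS' : s ∈ S' := Finset.mem_sdiff.mpr ⟨hs, hsG⟩
          have hz : ∀ t ∈ G, (if t ∈ G then e₂ * m₁ t else (W₁ + e₁) * m₂ t) *
              ((if t = s then n s else mval R (s - t)) - k) = 0 := by
            intro t ht
            have hts : t ≠ s := by rintro rfl; exact hsG ht
            have : mval R (s - t) = k := by
              rw [mval_sub_comm]
              exact hGX t ht s hsS'
            simp only [if_pos ht, if_neg hts, this]
            simp
          rw [Finset.sum_eq_zero hz, add_zero]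
          have : ∀ t ∈ S', (if t ∈ G then e₂ * m₁ t else (W₁ + e₁) * m₂ t) *
              ((if t = s then n s else mval R (s - t)) - k)
              = (W₁ + e₁) * (m₂ t * ((if t = s then n s else mval R (s - t)) - k)) := by
            intro t ht
            rw [if_neg (Finset.mem_sdiff.mp ht).2, mul_assoc]
          rw [Finset.sum_congr rfl this, ← Finset.mul_sum, hm₂ s hsS']
          ring

end ResClass
section Uniq
variable {R : Type*} [CommRing R] [IsDomain R] [IsDiscreteValuationRing R]
open IsLocalRing

lemma mval_one : mval R (1 : R) = 0 := by
  obtain ⟨ϖ, hϖ⟩ := IsDiscreteValuationRing.exists_irreducible R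
  have := mval_spec hϖ 0 1
  simpa using this

lemma mval_irr_pow {ϖ : R} (hϖ : Irreducible ϖ) (k : ℕ) : mval R (ϖ ^ k) = k := by
  have := mval_spec hϖ k 1
  simpa using this

/-- Any `S`-partition of a balanced set `S` coincides with the canonical partition
into the classes `s + M ^ (n s)`. -/
lemma partition_eq (S : Finset R) (n ρ : R → ℕ)
    (hmem : ∀ s ∈ S, resClass R s (n s) ∩ (S : Set R) = {s})
    (hcov : (⋃ s ∈ S, resClass R s (n s)) = Set.univ)
    (hρ : IsSPartition R S ρ) : ∀ s ∈ S, ρ s = n s := by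
  obtain ⟨hρcov, hρdisj, hρpoor⟩ := hρ
  intro s hs
  obtain ⟨ϖ, hϖ⟩ := IsDiscreteValuationRing.exists_irreducible R
  by_contra hne
  rcases Nat.lt_or_ge (n s) (ρ s) with hlt | hge
  · -- n s < ρ s : take x = s + ϖ ^ (n s)
    set x := s + ϖ ^ (n s) with hxdef
    have hxs : x ≠ s := by
      simp only [hxdef, ne_eq, add_eq_left]
      exact pow_ne_zero _ hϖ.ne_zero
    have hxval : mval R (x - s) = n s := by
      rw [show x - s = ϖ ^ (n s) by rw [hxdef]; ring, mval_irr_pow hϖ]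
    have hx_in : x ∈ resClass R s (n s) := by
      rw [mem_resClass_iff_mval hxs, hxval]
    have hx_nin : x ∉ resClass R s (ρ s) := by
      rw [mem_resClass_iff_mval hxs, hxval]
      omega
    -- x is covered by some ρ-block
    have : x ∈ ⋃ t ∈ S, resClass R t (ρ t) := by rw [hρcov]; trivial
    obtain ⟨t, htS, hxt⟩ := by simpa using this
    rcases le_or_gt (n s) (ρ t) with h1 | h1
    · -- the block of t sits inside s + M^(n s), so t = s
      have hsub : resClass R t (ρ t) ⊆ resClass R s (n s) := by
        rw [← resClass_eq_of_mem hxt, ← resClass_eq_of_mem hx_in]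
        exact resClass_anti h1
      have htmem : t ∈ ({s} : Set R) := by
        rw [← hmem s hs]
        exact ⟨hsub (mem_resClass_self t (ρ t)), htS⟩
      have : t = s := htmem
      subst this
      exact hx_nin hxt
    · -- the block of t contains s, so it equals the block of s
      have hsub : resClass R s (n s) ⊆ resClass R t (ρ t) := by
        rw [← resClass_eq_of_mem hxt, ← resClass_eq_of_mem hx_in]
        exact resClass_anti (le_of_lt h1)
      have hseq : resClass R s (ρ s) = resClass R t (ρ t) := by
        rcases hρdisj s hs t htS with h | h
        · exact h
        · exact absurd (Set.disjoint_left.mp h (mem_resClass_self s (ρ s))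
            (hsub (mem_resClass_self s (n s)))) (fun h => h)
      rw [← hseq] at hxt
      exact hx_nin hxt
  · -- ρ s < n s : use a poor child class of the block of s
    have hlt : ρ s < n s := by omega
    obtain ⟨-, u, husub, huempty⟩ := hρpoor s hs
    have huS : u ∉ S := fun h =>
      Set.eq_empty_iff_forall_notMem.mp huempty u ⟨mem_resClass_self u _, h⟩
    -- u is covered by some balanced class
    have : u ∈ ⋃ t ∈ S, resClass R t (n t) := by rw [hcov]; trivial
    obtain ⟨t, htS, hut⟩ := by simpa using this
    have hut_ne : u ≠ t := fun h => huS (h ▸ htS)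
    have hnt : n t ≤ mval R (u - t) := (mem_resClass_iff_mval hut_ne).mp hut
    -- t is not in the poor class of u
    have htnin : t ∉ resClass R u (ρ s + 1) := fun h =>
      Set.eq_empty_iff_forall_notMem.mp huempty t ⟨h, htS⟩
    have hntle : n t ≤ ρ s := by
      rw [mem_resClass_iff_mval (Ne.symm hut_ne), mval_sub_comm] at htnin
      omega
    -- u ∈ s + M^(ρ s)
    have hus : u ∈ resClass R s (ρ s) := husub (mem_resClass_self u _)
    have hus_ne : u ≠ s := fun h => huS (h ▸ hs)
    have husval : ρ s ≤ mval R (u - s) := (mem_resClass_iff_mval hus_ne).mp hus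
    -- then s ∈ t + M^(n t), forcing s = t
    have hst : s = t := by
      by_contra hst
      have h1 : s - t = (s - u) + (u - t) := by ring
      have h2 : n t ≤ mval R (s - t) := by
        rw [h1]
        refine le_trans ?_ (mval_min_le_add (sub_ne_zero.mpr (Ne.symm hus_ne))
          (sub_ne_zero.mpr hut_ne) (by rw [← h1]; exact sub_ne_zero.mpr hst))
        rw [mval_sub_comm s u]
        omega
      have : s ∈ ({t} : Set R) := by
        rw [← hmem t htS]
        exact ⟨(mem_resClass_iff_mval hst).mpr h2, hs⟩
      exact hst this
    subst hst
    omega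

end Uniq
section Final
variable {R : Type*} [CommRing R] [IsDomain R] [IsDiscreteValuationRing R]
open IsLocalRing

lemma mval_prod_pow (S : Finset R) (g : R → R) (m : R → ℕ) (h : ∀ t ∈ S, g t ≠ 0) :
    mval R (∏ t ∈ S, g t ^ m t) = ∑ t ∈ S, m t * mval R (g t) := by
  induction S using Finset.cons_induction with
  | empty => simpa using mval_one
  | cons a s ha ih =>
      have hga : g a ≠ 0 := h a (Finset.mem_cons_self a s)
      have hs : ∀ t ∈ s, g t ≠ 0 := fun t ht => h t (Finset.mem_cons_of_mem ht)
      have hprod : (∏ t ∈ s, g t ^ m t) ≠ 0 := by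
        rw [Finset.prod_ne_zero_iff]
        exact fun t ht => pow_ne_zero _ (hs t ht)
      rw [Finset.prod_cons, Finset.sum_cons,
        mval_mul (pow_ne_zero _ hga) hprod, mval_pow hga, ih hs]

end Final

/-- For every balanced set `S ⊆ R` there are positive integers
`(m s)_{s ∈ S}` and a non-negative integer `e` such that `f = ∏_{s ∈ S}(x - s)^{m s}`
satisfies `v (f r) = e` for every `r` lying in any `S`-poor neighborhood of `C_S`. -/
theorem statement15 (R : Type*) [CommRing R] [IsDomain R] [IsDiscreteValuationRing R]
    [Finite (IsLocalRing.ResidueField R)]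
    (S : Finset R) (hS : IsBalanced R S) :
    ∃ m : R → ℕ, (∀ s ∈ S, 0 < m s) ∧ ∃ e : ℕ,
      ∀ ρ : R → ℕ, IsSPartition R S ρ →
        ∀ r : R, IsPoorElt R S ρ r →
          vR R ((∏ s ∈ S, (Polynomial.X - Polynomial.C s) ^ m s).eval r) = (e : ℕ∞) := by
  obtain ⟨hne, n, hmin, hdisjcl, hcov⟩ := hS
  have hmem : ∀ s ∈ S, resClass R s (n s) ∩ (S : Set R) = {s} := fun s hs => (hmin s hs).1
  have hnum : ∀ s ∈ S, ∀ t ∈ S, s ≠ t → 0 ≤ mval R (s - t) ∧ mval R (s - t) < n s := by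
    intro s hs t ht hst
    refine ⟨Nat.zero_le _, ?_⟩
    by_contra hc
    push_neg at hc
    have htmem : t ∈ resClass R s (n s) := by
      rw [mem_resClass_iff_mval (Ne.symm hst), mval_sub_comm]
      omega
    exact Set.disjoint_left.mp (hdisjcl s hs t ht hst) htmem (mem_resClass_self t (n t))
  obtain ⟨m, hmpos, e, heq⟩ := key_lemma (S.sup n + S.card) (S.sup n) 0 S n le_rfl
    (fun s hs => ⟨Nat.zero_le _, by simpa using Finset.le_sup hs⟩) hnum
  refine ⟨m, hmpos, e, ?_⟩
  intro ρ hρ r hpoor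
  obtain ⟨s, hsS, hrblock, hrempty⟩ := hpoor
  have hρs : ρ s = n s := partition_eq S n ρ hmem hcov hρ s hsS
  rw [hρs] at hrblock hrempty
  have hrS : r ∉ S := fun h =>
    Set.eq_empty_iff_forall_notMem.mp hrempty r ⟨mem_resClass_self _ _, h⟩
  have hrs_ne : r ≠ s := fun h => hrS (h ▸ hsS)
  have h1 : n s ≤ mval R (r - s) := (mem_resClass_iff_mval hrs_ne).mp hrblock
  have h2 : mval R (r - s) ≤ n s := by
    have hsnin : s ∉ resClass R r (n s + 1) := fun h =>
      Set.eq_empty_iff_forall_notMem.mp hrempty s ⟨h, hsS⟩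
    rw [mem_resClass_iff_mval (Ne.symm hrs_ne), mval_sub_comm] at hsnin
    omega
  have hrs : mval R (r - s) = n s := le_antisymm h2 h1
  have hcross : ∀ t ∈ S, t ≠ s → mval R (r - t) = mval R (s - t) := by
    intro t htS hts
    have hlt : mval R (s - t) < n s := (hnum s hsS t htS (Ne.symm hts)).2
    have hsplit : r - t = (r - s) + (s - t) := by ring
    rw [hsplit, mval_add_eq_of_lt (sub_ne_zero.mpr hrs_ne)
      (sub_ne_zero.mpr (fun h => hts (by rw [h]) )) (by rw [hrs]; omega)]
  have hnz : ∀ t ∈ S, r - t ≠ 0 := fun t ht => sub_ne_zero.mpr (fun h => hrS (h ▸ ht))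
  have heval : (∏ t ∈ S, (Polynomial.X - Polynomial.C t) ^ m t).eval r
      = ∏ t ∈ S, (r - t) ^ m t := by
    simp [Polynomial.eval_prod]
  have hprodnz : (∏ t ∈ S, (r - t) ^ m t) ≠ 0 := by
    rw [Finset.prod_ne_zero_iff]
    exact fun t ht => pow_ne_zero _ (hnz t ht)
  rw [heval]
  unfold vR
  rw [if_neg hprodnz]
  rw [mval_prod_pow S _ m hnz]
  norm_cast
  rw [← heq s hsS]
  apply Finset.sum_congr rfl
  intro t ht
  by_cases hts : t = s
  · subst hts
    rw [if_pos rfl, hrs, Nat.sub_zero]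
  · rw [if_neg hts, Nat.sub_zero, hcross t ht hts]
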